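/- Let L > 0 and let μ be a probability measure on ℝ supported on [−L,L], with Cauchy transform G_μ(z) = ∫ dμ(t)/(z−t), and set g(z) = G_μ(1/z), a holomorphic function on {|z| < 1/L}. Then g has exactly one zero in the closed disc {|z| ≤ (2L)^{−1}} (namely z = 0), and |g(z)| ≥ (4L)^{−1} for every z on the circle |z| = (2L)^{−1}. -/

import Mathlib

open MeasureTheory Complex Set

/-- The Cauchy transform of a measure on ℝ: `G_μ(z) = ∫ dμ(t)/(z−t)`. -/
noncomputable def cauchyT (μ : Measure ℝ) (z : ℂ) : ℂ := ∫ t : ℝ, (z - (t : ℂ))⁻¹ ∂μ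

/-- The cumulative distribution function of a measure on ℝ. -/
noncomputable def cdfOf (μ : Measure ℝ) (x : ℝ) : ℝ := (μ (Set.Iic x)).toReal

/-- The cumulative distribution function of the standard semicircle law. -/
noncomputable def semicircleCDF (x : ℝ) : ℝ :=
  (1 / Real.pi) * ∫ t in Set.Iic x,
    Set.indicator (Set.Icc (-2 : ℝ) 2) (fun s => Real.sqrt (4 - s ^ 2)) t

/-- The branch of `√(z²−4)` holomorphic on the upper half-plane with `√(z²−4) ∼ z`
as `z → ∞`, given by `√(z−2)·√(z+2)` with principal square roots. -/
noncomputable def sqrtBr (z : ℂ) : ℂ := (z - 2) ^ ((1 : ℂ) / 2) * (z + 2) ^ ((1 : ℂ) / 2)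

/-- The Cauchy transform of the semicircle law: `G_Φ(z) = (z − √(z²−4))/2`. -/
noncomputable def Gsc (z : ℂ) : ℂ := (z - sqrtBr z) / 2


lemma re_lb (a : ℂ) (ha : ‖a‖ ≤ 1/2) : (2:ℝ)/3 ≤ ((1 - a)⁻¹).re := by
  have hne : (1:ℂ) - a ≠ 0 := by
    intro h
    have : a = 1 := by linear_combination -h
    rw [this] at ha; simp at ha; norm_num at ha
  have h2 : 0 < Complex.normSq (1 - a) := Complex.normSq_pos.mpr hne
  have hr : |a.re| ≤ 1/2 := le_trans (Complex.abs_re_le_norm a) ha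
  have hsq : a.re ^ 2 + a.im ^ 2 ≤ 1/4 := by
    have := Complex.sq_norm a
    have h4 : ‖a‖ ^ 2 ≤ 1/4 := by nlinarith [norm_nonneg a]
    rw [Complex.normSq_apply] at this; nlinarith
  rw [Complex.inv_re]
  have hre : (1 - a).re = 1 - a.re := by simp
  have hnsq : Complex.normSq (1 - a) = (1 - a.re)^2 + a.im^2 := by
    rw [Complex.normSq_apply]; simp; ring
  rw [hre, le_div_iff₀ h2, hnsq]
  nlinarith [abs_le.mp hr]

lemma key (L : ℝ) (hL : 0 < L) (μ : Measure ℝ) [IsProbabilityMeasure μ]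
    (hsupp : μ (Set.Icc (-L) L)ᶜ = 0) (z : ℂ) (hz : z ≠ 0)
    (hzle : ‖z‖ ≤ (2*L)⁻¹) :
    (2/3) * ‖z‖ ≤ ‖cauchyT μ (1/z)‖ := by
  have hae : ∀ᵐ t ∂μ, |t| ≤ L := by
    rw [ae_iff]
    refine measure_mono_null ?_ hsupp
    intro t ht
    simp only [Set.mem_compl_iff, Set.mem_Icc, Set.mem_setOf_eq] at *
    intro h; exact ht (abs_le.mpr h)
  have hbd : ∀ᵐ t : ℝ ∂μ, ‖z * (t:ℂ)‖ ≤ 1/2 := by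
    filter_upwards [hae] with t ht
    rw [norm_mul]
    have h1 : ‖(t:ℂ)‖ ≤ L := by rwa [Complex.norm_real, Real.norm_eq_abs]
    calc ‖z‖ * ‖(t:ℂ)‖ ≤ (2*L)⁻¹ * L := by
          apply mul_le_mul hzle h1 (norm_nonneg _) (by positivity)
      _ = 1/2 := by field_simp
  have hne : ∀ᵐ t : ℝ ∂μ, (1:ℂ) - z * t ≠ 0 := by
    filter_upwards [hbd] with t ht h
    have : z * (t:ℂ) = 1 := by linear_combination -h
    rw [this] at ht; simp at ht; norm_num at ht
  have hmeas : Measurable fun t : ℝ => ((1:ℂ) - z * t)⁻¹ :=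
    (measurable_const.sub (measurable_const.mul Complex.measurable_ofReal)).inv
  have hint : Integrable (fun t : ℝ => ((1:ℂ) - z * t)⁻¹) μ := by
    refine (integrable_const (2:ℝ)).mono' hmeas.aestronglyMeasurable ?_
    filter_upwards [hbd] with t ht
    have h1 : (1:ℝ)/2 ≤ ‖1 - z * t‖ := by
      have := norm_sub_norm_le (1:ℂ) (z * (t:ℂ))
      simp only [norm_one] at this
      linarith
    rw [norm_inv]
    rw [inv_le_comm₀ (by linarith) (by norm_num)]
    linarith
  have heq : cauchyT μ (1/z) = z * ∫ t, ((1:ℂ) - z * t)⁻¹ ∂μ := by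
    rw [cauchyT, ← integral_const_mul]
    refine integral_congr_ae ?_
    filter_upwards [hne] with t ht
    field_simp
  have hre : (2:ℝ)/3 ≤ (∫ t, ((1:ℂ) - z * t)⁻¹ ∂μ).re := by
    have hir := integral_re hint
    simp only [RCLike.re_eq_complex_re] at hir
    rw [← hir]
    have : (2:ℝ)/3 = ∫ _ : ℝ, (2:ℝ)/3 ∂μ := by simp
    rw [this]
    refine integral_mono_ae (integrable_const _) hint.re ?_
    filter_upwards [hbd] with t ht
    exact re_lb _ ht
  have habs : (2:ℝ)/3 ≤ ‖∫ t, ((1:ℂ) - z * t)⁻¹ ∂μ‖ :=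
    le_trans hre (Complex.re_le_norm _)
  rw [heq, norm_mul]
  calc 2/3 * ‖z‖ = ‖z‖ * (2/3) := by ring
    _ ≤ ‖z‖ * ‖∫ t, ((1:ℂ) - z * t)⁻¹ ∂μ‖ := by
        apply mul_le_mul_of_nonneg_left habs (norm_nonneg _)

open Classical in
theorem g_one_zero_and_lower_bound (L : ℝ) (hL : 0 < L) (μ : Measure ℝ)
    [IsProbabilityMeasure μ] (hsupp : μ (Set.Icc (-L) L)ᶜ = 0) :
    (∀ z ∈ Metric.closedBall (0 : ℂ) (2 * L)⁻¹,
        (if z = 0 then 0 else cauchyT μ (1 / z)) = 0 ↔ z = 0) ∧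
    (∀ z : ℂ, ‖z‖ = (2 * L)⁻¹ →
        (4 * L)⁻¹ ≤ ‖cauchyT μ (1 / z)‖) := by
  constructor
  · intro z hz
    by_cases h : z = 0
    · simp [h]
    · rw [if_neg h]
      constructor
      · intro hg
        exfalso
        have hzle : ‖z‖ ≤ (2*L)⁻¹ := by
          rw [Metric.mem_closedBall, dist_zero_right] at hz
          exact hz
        have := key L hL μ hsupp z h hzle
        rw [hg] at this
        simp at this
        have : ‖z‖ = 0 := le_antisymm (by linarith) (norm_nonneg _)
        exact h (norm_eq_zero.mp this)
      · intro hz0; exact absurd hz0 h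
  · intro z hz
    have hz0 : z ≠ 0 := by
      intro h; rw [h, norm_zero] at hz
      have hp : (0:ℝ) < (2*L)⁻¹ := by positivity
      exact absurd hz.symm (ne_of_gt hp)
    have := key L hL μ hsupp z hz0 (le_of_eq hz)
    rw [hz] at this
    calc (4*L)⁻¹ ≤ 2/3 * (2*L)⁻¹ := by
          rw [show (2:ℝ)/3 * (2*L)⁻¹ = (3*L)⁻¹ by field_simp]
          exact inv_anti₀ (by positivity) (by linarith)
      _ ≤ _ := this
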